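/- Let H be a thick spider with partition (S, K, R) such that the subgraph of H induced by R is P4-sparse, let u ∈ R, and let uw be a tail added to H (w ∉ V(H)). Then every P4-sparse completion of H+uw contains at least |K| fill edges having at least one endpoint in S ∪ K. -/

import Mathlib

open SimpleGraph Set

variable {α : Type*}

/-- The graph `G + uw` obtained from `G` by adding the tail edge `uw`. -/
def addTail (G : SimpleGraph α) (u w : α) : SimpleGraph α :=
  G ⊔ SimpleGraph.fromEdgeSet {s(u, w)}

/-- The number of fill edges of a completion `G'` of the base graph `base`:
the edges of `G'` that are not edges of `base`. -/
noncomputable def fillCount (base G' : SimpleGraph α) : ℕ :=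
  (G'.edgeSet \ base.edgeSet).ncard

/-- `S` is an independent set of the graph `G`. -/
def IsIndepSetOn (G : SimpleGraph α) (S : Set α) : Prop :=
  ∀ x ∈ S, ∀ y ∈ S, ¬ G.Adj x y

/-- A graph is split if its vertex set can be partitioned into a clique and an
independent set. -/
def IsSplitGraph (G : SimpleGraph α) : Prop :=
  ∃ K S : Set α, K ∪ S = Set.univ ∧ Disjoint K S ∧ G.IsClique K ∧ IsIndepSetOn G S

/-- `a b c d` (in this order) induce a chordless path `P₄` in `G`. -/
def IsInducedP4 (G : SimpleGraph α) (a b c d : α) : Prop :=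
  a ≠ b ∧ a ≠ c ∧ a ≠ d ∧ b ≠ c ∧ b ≠ d ∧ c ≠ d ∧
  G.Adj a b ∧ G.Adj b c ∧ G.Adj c d ∧ ¬ G.Adj a c ∧ ¬ G.Adj a d ∧ ¬ G.Adj b d

/-- `a b c d` (in this order) induce a chordless cycle `C₄` in `G`. -/
def IsInducedC4 (G : SimpleGraph α) (a b c d : α) : Prop :=
  a ≠ b ∧ a ≠ c ∧ a ≠ d ∧ b ≠ c ∧ b ≠ d ∧ c ≠ d ∧
  G.Adj a b ∧ G.Adj b c ∧ G.Adj c d ∧ G.Adj d a ∧ ¬ G.Adj a c ∧ ¬ G.Adj b d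

/-- `a b c d` induce a `2K₂` (two independent edges `ab` and `cd`) in `G`. -/
def IsInduced2K2 (G : SimpleGraph α) (a b c d : α) : Prop :=
  a ≠ b ∧ a ≠ c ∧ a ≠ d ∧ b ≠ c ∧ b ≠ d ∧ c ≠ d ∧
  G.Adj a b ∧ G.Adj c d ∧ ¬ G.Adj a c ∧ ¬ G.Adj a d ∧ ¬ G.Adj b c ∧ ¬ G.Adj b d

/-- A graph is threshold iff it has no induced `C₄`, `P₄`, or `2K₂`. -/
def IsThresholdGraph (G : SimpleGraph α) : Prop :=
  (∀ a b c d, ¬ IsInducedC4 G a b c d) ∧ (∀ a b c d, ¬ IsInducedP4 G a b c d) ∧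
  (∀ a b c d, ¬ IsInduced2K2 G a b c d)

/-- A graph is quasi-threshold iff it has no induced `C₄` or `P₄`. -/
def IsQuasiThresholdGraph (G : SimpleGraph α) : Prop :=
  (∀ a b c d, ¬ IsInducedC4 G a b c d) ∧ (∀ a b c d, ¬ IsInducedP4 G a b c d)

/-- `t` is the vertex set of an induced `P₄` of `G`. -/
def IsP4SetOn (G : SimpleGraph α) (t : Set α) : Prop :=
  ∃ a b c d : α, t = {a, b, c, d} ∧ IsInducedP4 G a b c d

/-- A graph is `P₄`-sparse iff every set of five vertices induces at most one `P₄`. -/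
def IsP4Sparse (G : SimpleGraph α) : Prop :=
  ∀ s : Set α, s.ncard = 5 →
    ∀ t₁ ⊆ s, ∀ t₂ ⊆ s, IsP4SetOn G t₁ → IsP4SetOn G t₂ → t₁ = t₂

/-- The subgraph of `H` induced by the set `R` (as a graph on the same vertex type,
all vertices outside `R` being isolated). -/
def restrictSet (H : SimpleGraph α) (R : Set α) : SimpleGraph α where
  Adj x y := H.Adj x y ∧ x ∈ R ∧ y ∈ R
  symm := by
    first
    | exact fun x y ⟨h, hx, hy⟩ => ⟨h.symm, hy, hx⟩
    | exact ⟨fun x y ⟨h, hx, hy⟩ => ⟨h.symm, hy, hx⟩⟩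
  loopless := ⟨fun x h => H.loopless.irrefl x h.1⟩

/-- `(S, K, R)` is a thin-spider partition of (the vertex set of) `H`. -/
def ThinSpider (H : SimpleGraph α) (S K R : Set α) : Prop :=
  IsIndepSetOn H S ∧ H.IsClique K ∧ S.ncard = K.ncard ∧ 2 ≤ K.ncard ∧
  Disjoint S K ∧ Disjoint S R ∧ Disjoint K R ∧
  (∀ r ∈ R, ∀ k ∈ K, H.Adj r k) ∧ (∀ r ∈ R, ∀ s ∈ S, ¬ H.Adj r s) ∧
  ∃ f : α → α, Set.BijOn f S K ∧ ∀ s ∈ S, ∀ k ∈ K, (H.Adj s k ↔ k = f s)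

/-- `(S, K, R)` is a thick-spider partition of (the vertex set of) `H`;
thick spiders are assumed to have `|K| ≥ 3`. -/
def ThickSpider (H : SimpleGraph α) (S K R : Set α) : Prop :=
  IsIndepSetOn H S ∧ H.IsClique K ∧ S.ncard = K.ncard ∧ 3 ≤ K.ncard ∧
  Disjoint S K ∧ Disjoint S R ∧ Disjoint K R ∧
  (∀ r ∈ R, ∀ k ∈ K, H.Adj r k) ∧ (∀ r ∈ R, ∀ s ∈ S, ¬ H.Adj r s) ∧
  ∃ f : α → α, Set.BijOn f S K ∧ ∀ s ∈ S, ∀ k ∈ K, (H.Adj s k ↔ k ≠ f s)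

/-- The set of possible numbers of fill edges of completions of `base` into the
graph class `C`. -/
def completionFills (C : SimpleGraph α → Prop) (base : SimpleGraph α) : Set ℕ :=
  {n | ∃ G' : SimpleGraph α, base ≤ G' ∧ C G' ∧ fillCount base G' = n}

private lemma ncard5 {a b c d e : α} (hab : a ≠ b) (hac : a ≠ c) (had : a ≠ d) (hae : a ≠ e)
    (hbc : b ≠ c) (hbd : b ≠ d) (hbe : b ≠ e) (hcd : c ≠ d) (hce : c ≠ e) (hde : d ≠ e) :
    ({a, b, c, d, e} : Set α).ncard = 5 := by
  rw [Set.ncard_insert_of_notMem (by simp [hab, hac, had, hae]),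
      Set.ncard_insert_of_notMem (by simp [hbc, hbd, hbe]),
      Set.ncard_insert_of_notMem (by simp [hcd, hce]),
      Set.ncard_insert_of_notMem (by simp [hde]), Set.ncard_singleton]

private lemma p4_five_contra {G : SimpleGraph α} (hsp : IsP4Sparse G) {a b c d e : α}
    (hab : a ≠ b) (hac : a ≠ c) (had : a ≠ d) (hae : a ≠ e)
    (hbc : b ≠ c) (hbd : b ≠ d) (hbe : b ≠ e) (hcd : c ≠ d) (hce : c ≠ e) (hde : d ≠ e)
    (h1 : IsP4SetOn G {a, b, c, d}) (h2 : IsP4SetOn G {a, b, c, e}) : False := by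
  have h5 := ncard5 hab hac had hae hbc hbd hbe hcd hce hde
  have hseq := hsp {a, b, c, d, e} h5 {a, b, c, d}
      (by intro x hx; simp at hx ⊢; tauto) {a, b, c, e}
      (by intro x hx; simp at hx ⊢; tauto) h1 h2
  have hd : d ∈ ({a, b, c, e} : Set α) := hseq ▸ (by simp : d ∈ ({a, b, c, d} : Set α))
  simp at hd
  rcases hd with h | h | h | h
  exacts [had h.symm, hbd h.symm, hcd h.symm, hde h]

set_option maxHeartbeats 3200000 in
/-- tail at `u ∈ R` of a thick spider: every P₄-sparse completion of
`H+uw` has at least `|K|` fill edges with an endpoint in `S ∪ K`. -/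
theorem thickSpider_tail_R_lower_bound [Fintype α]
    (H : SimpleGraph α) (u w : α) (S K R : Set α)
    (hspider : ThickSpider H S K R)
    (hcover : S ∪ K ∪ R = {w}ᶜ)
    (hw : ∀ x, ¬ H.Adj w x)
    (hRsparse : IsP4Sparse (restrictSet H R)) (hu : u ∈ R) :
    ∀ G' : SimpleGraph α, addTail H u w ≤ G' → IsP4Sparse G' →
      K.ncard ≤
        ((G'.edgeSet \ (addTail H u w).edgeSet) ∩
          {e : Sym2 α | ∃ x ∈ S ∪ K, x ∈ e}).ncard := by
  classical
  obtain ⟨hSind, hKcl, hSKcard, hK3, dSK, dSR, dKR, hRK, hRS, f, hfbij, hfadj⟩ := hspider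
  intro G' hle hsp
  haveI : Nonempty α := ⟨w⟩
  set F := ((G'.edgeSet \ (addTail H u w).edgeSet) ∩
      {e : Sym2 α | ∃ x ∈ S ∪ K, x ∈ e}) with hFdef
  -- basic distinctness facts
  have hneW : ∀ x ∈ S ∪ K ∪ R, x ≠ w := by
    intro x hx
    have hx' : x ∈ ({w}ᶜ : Set α) := hcover ▸ hx
    simpa using hx'
  have hSw : ∀ s ∈ S, s ≠ w := fun s hs => hneW s (Or.inl (Or.inl hs))
  have hKw : ∀ k ∈ K, k ≠ w := fun k hk => hneW k (Or.inl (Or.inr hk))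
  have huw : u ≠ w := hneW u (Or.inr hu)
  have hSK : ∀ s ∈ S, ∀ k ∈ K, s ≠ k :=
    fun s hs k hk h => Set.disjoint_left.mp dSK hs (h ▸ hk)
  have hSR : ∀ s ∈ S, ∀ r ∈ R, s ≠ r :=
    fun s hs r hr h => Set.disjoint_left.mp dSR hs (h ▸ hr)
  have hKR : ∀ k ∈ K, ∀ r ∈ R, k ≠ r :=
    fun k hk r hr h => Set.disjoint_left.mp dKR hk (h ▸ hr)
  -- the inverse of f
  have hfK : ∀ s ∈ S, f s ∈ K := fun s hs => hfbij.mapsTo hs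
  set g := Function.invFunOn f S with hgdef
  have hgS : ∀ k ∈ K, g k ∈ S := by
    intro k hk
    obtain ⟨a, ha, hfa⟩ := hfbij.surjOn hk
    exact Function.invFunOn_mem ⟨a, ha, hfa⟩
  have hfg : ∀ k ∈ K, f (g k) = k := by
    intro k hk
    obtain ⟨a, ha, hfa⟩ := hfbij.surjOn hk
    exact Function.invFunOn_eq ⟨a, ha, hfa⟩
  have hgf : ∀ s ∈ S, g (f s) = s :=
    fun s hs => hfbij.injOn (hgS (f s) (hfK s hs)) hs (hfg (f s) (hfK s hs))
  have hgInj : ∀ k ∈ K, ∀ k' ∈ K, g k = g k' → k = k' := by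
    intro k hk k' hk' h
    calc k = f (g k) := (hfg k hk).symm
      _ = f (g k') := by rw [h]
      _ = k' := hfg k' hk'
  have hfneg : ∀ s ∈ S, ∀ k ∈ K, s ≠ g k → f s ≠ k := by
    intro s hs k hk hne h
    exact hne (by rw [← h]; exact (hgf s hs).symm)
  -- adjacency facts
  have hbadj : ∀ x y : α, (addTail H u w).Adj x y ↔ H.Adj x y ∨ (s(x, y) = s(u, w) ∧ x ≠ y) := by
    intro x y
    show (H ⊔ SimpleGraph.fromEdgeSet {s(u, w)}).Adj x y ↔ _
    rw [SimpleGraph.sup_adj, SimpleGraph.fromEdgeSet_adj]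
    simp
  have hHle : ∀ x y : α, H.Adj x y → G'.Adj x y :=
    fun x y h => hle ((hbadj x y).mpr (Or.inl h))
  have huwG : G'.Adj u w := hle ((hbadj u w).mpr (Or.inr ⟨rfl, huw⟩))
  have hGsk : ∀ s ∈ S, ∀ k ∈ K, k ≠ f s → G'.Adj s k :=
    fun s hs k hk hne => hHle s k ((hfadj s hs k hk).mpr hne)
  have hGuk : ∀ k ∈ K, G'.Adj u k := fun k hk => hHle u k (hRK u hu k hk)
  have hGkk : ∀ k ∈ K, ∀ k' ∈ K, k ≠ k' → G'.Adj k k' :=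
    fun k hk k' hk' hne => hHle k k' (hKcl hk hk' hne)
  have hHus : ∀ s ∈ S, ¬ H.Adj u s := fun s hs => hRS u hu s hs
  have hHsfs : ∀ s ∈ S, ¬ H.Adj s (f s) := by
    intro s hs h
    exact (hfadj s hs (f s) (hfK s hs)).mp h rfl
  -- fill membership
  have hfillF : ∀ x y : α, G'.Adj x y → ¬ H.Adj x y → s(x, y) ≠ s(u, w) →
      (x ∈ S ∪ K ∨ y ∈ S ∪ K) → s(x, y) ∈ F := by
    intro x y hadj hH hne hxy
    rw [hFdef]
    refine ⟨⟨G'.mem_edgeSet.mpr hadj, fun hmem => ?_⟩, ?_⟩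
    · have hb := (addTail H u w).mem_edgeSet.mp hmem
      rcases (hbadj x y).mp hb with h | h
      exacts [hH h, hne h.1]
    · rcases hxy with h | h
      · exact ⟨x, h, by simp⟩
      · exact ⟨y, h, by simp⟩
  -- the four structural lemmas
  have LO1 : ∀ s ∈ S, ∀ k₁ ∈ K, ∀ k₂ ∈ K, k₁ ≠ k₂ → k₁ ≠ f s → k₂ ≠ f s →
      ¬ G'.Adj u s → ¬ G'.Adj w s → ¬ G'.Adj w k₁ → ¬ G'.Adj w k₂ → False := by
    intro s hs k₁ hk₁ k₂ hk₂ h12 hf1 hf2 hus hws hwk₁ hwk₂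
    have hsu : s ≠ u := hSR s hs u hu
    have hsw : s ≠ w := hSw s hs
    refine p4_five_contra hsp (a := s) (b := u) (c := w) (d := k₁) (e := k₂)
      hsu hsw (hSK s hs k₁ hk₁) (hSK s hs k₂ hk₂) huw
      (Ne.symm (hKR k₁ hk₁ u hu)) (Ne.symm (hKR k₂ hk₂ u hu))
      (Ne.symm (hKw k₁ hk₁)) (Ne.symm (hKw k₂ hk₂)) h12 ?_ ?_
    · exact ⟨s, k₁, u, w, by ext x; simp; tauto,
        hSK s hs k₁ hk₁, hsu, hsw, hKR k₁ hk₁ u hu, hKw k₁ hk₁, huw,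
        hGsk s hs k₁ hk₁ hf1, (hGuk k₁ hk₁).symm, huwG,
        fun h => hus h.symm, fun h => hws h.symm, fun h => hwk₁ h.symm⟩
    · exact ⟨s, k₂, u, w, by ext x; simp; tauto,
        hSK s hs k₂ hk₂, hsu, hsw, hKR k₂ hk₂ u hu, hKw k₂ hk₂, huw,
        hGsk s hs k₂ hk₂ hf2, (hGuk k₂ hk₂).symm, huwG,
        fun h => hus h.symm, fun h => hws h.symm, fun h => hwk₂ h.symm⟩
  have LF1 : ∀ k ∈ K, ¬ G'.Adj w k → ∀ s' ∈ S, ∀ s'' ∈ S, s' ≠ s'' → k ≠ f s' → k ≠ f s'' →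
      ¬ G'.Adj u s' → ¬ G'.Adj w s' → ¬ G'.Adj u s'' → ¬ G'.Adj w s'' →
      ¬ G'.Adj s' s'' → False := by
    intro k hk hwk s' hs' s'' hs'' hne hf1 hf2 hus' hws' hus'' hws'' hss
    refine p4_five_contra hsp (a := k) (b := u) (c := w) (d := s') (e := s'')
      (hKR k hk u hu) (hKw k hk) (Ne.symm (hSK s' hs' k hk)) (Ne.symm (hSK s'' hs'' k hk))
      huw (Ne.symm (hSR s' hs' u hu)) (Ne.symm (hSR s'' hs'' u hu))
      (Ne.symm (hSw s' hs')) (Ne.symm (hSw s'' hs'')) hne ?_ ?_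
    · exact ⟨s', k, u, w, by ext x; simp; tauto,
        hSK s' hs' k hk, hSR s' hs' u hu, hSw s' hs', hKR k hk u hu, hKw k hk, huw,
        hGsk s' hs' k hk hf1, (hGuk k hk).symm, huwG,
        fun h => hus' h.symm, fun h => hws' h.symm, fun h => hwk h.symm⟩
    · exact ⟨s'', k, u, w, by ext x; simp; tauto,
        hSK s'' hs'' k hk, hSR s'' hs'' u hu, hSw s'' hs'', hKR k hk u hu, hKw k hk, huw,
        hGsk s'' hs'' k hk hf2, (hGuk k hk).symm, huwG,
        fun h => hus'' h.symm, fun h => hws'' h.symm, fun h => hwk h.symm⟩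
  have LO3 : ∀ s ∈ S, ∀ s' ∈ S, s ≠ s' → G'.Adj u s → ¬ G'.Adj u s' → ¬ G'.Adj s s' →
      ¬ G'.Adj s (f s) → ¬ G'.Adj s' (f s') → False := by
    intro s hs s' hs' hss' hus hus' hss hsf hs'f
    have hfs := hfK s hs
    have hfs' := hfK s' hs'
    have hffne : f s ≠ f s' := fun h => hss' (hfbij.injOn hs hs' h)
    refine p4_five_contra hsp (a := s') (b := f s) (c := s) (d := u) (e := f s')
      (hSK s' hs' (f s) hfs) hss'.symm (hSR s' hs' u hu) (hSK s' hs' (f s') hfs')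
      (Ne.symm (hSK s hs (f s) hfs)) (hKR (f s) hfs u hu) hffne
      (hSR s hs u hu) (hSK s hs (f s') hfs') (Ne.symm (hKR (f s') hfs' u hu)) ?_ ?_
    · exact ⟨s', f s, u, s, by ext x; simp; tauto,
        hSK s' hs' (f s) hfs, hSR s' hs' u hu, hss'.symm,
        hKR (f s) hfs u hu, Ne.symm (hSK s hs (f s) hfs), Ne.symm (hSR s hs u hu),
        hGsk s' hs' (f s) hfs hffne, (hGuk (f s) hfs).symm, hus,
        fun h => hus' h.symm, fun h => hss h.symm, fun h => hsf h.symm⟩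
    · exact ⟨s', f s, f s', s, by ext x; simp; tauto,
        hSK s' hs' (f s) hfs, hSK s' hs' (f s') hfs', hss'.symm,
        hffne, Ne.symm (hSK s hs (f s) hfs), Ne.symm (hSK s hs (f s') hfs'),
        hGsk s' hs' (f s) hfs hffne, hGkk (f s) hfs (f s') hfs' hffne,
        (hGsk s hs (f s') hfs' hffne.symm).symm,
        hs'f, fun h => hss h.symm, fun h => hsf h.symm⟩
  have LO4 : ∀ s ∈ S, ∀ s' ∈ S, s ≠ s' → G'.Adj w s → G'.Adj w (f s) → ¬ G'.Adj w s' →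
      ¬ G'.Adj s s' → ¬ G'.Adj s (f s) → ¬ G'.Adj s' (f s') → False := by
    intro s hs s' hs' hss' hws hwfs hws' hss hsf hs'f
    have hfs := hfK s hs
    have hfs' := hfK s' hs'
    have hffne : f s ≠ f s' := fun h => hss' (hfbij.injOn hs hs' h)
    refine p4_five_contra hsp (a := s') (b := f s) (c := s) (d := w) (e := f s')
      (hSK s' hs' (f s) hfs) hss'.symm (hSw s' hs') (hSK s' hs' (f s') hfs')
      (Ne.symm (hSK s hs (f s) hfs)) (hKw (f s) hfs) hffne
      (hSw s hs) (hSK s hs (f s') hfs') (Ne.symm (hKw (f s') hfs')) ?_ ?_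
    · exact ⟨s', f s, w, s, by ext x; simp; tauto,
        hSK s' hs' (f s) hfs, hSw s' hs', hss'.symm,
        hKw (f s) hfs, Ne.symm (hSK s hs (f s) hfs), Ne.symm (hSw s hs),
        hGsk s' hs' (f s) hfs hffne, hwfs.symm, hws,
        fun h => hws' h.symm, fun h => hss h.symm, fun h => hsf h.symm⟩
    · exact ⟨s', f s, f s', s, by ext x; simp; tauto,
        hSK s' hs' (f s) hfs, hSK s' hs' (f s') hfs', hss'.symm,
        hffne, Ne.symm (hSK s hs (f s) hfs), Ne.symm (hSK s hs (f s') hfs'),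
        hGsk s' hs' (f s) hfs hffne, hGkk (f s) hfs (f s') hfs' hffne,
        (hGsk s hs (f s') hfs' hffne.symm).symm,
        hs'f, fun h => hss h.symm, fun h => hsf h.symm⟩
  -- the set B of clique vertices not adjacent to w in G'
  set B : Set α := {k | k ∈ K ∧ ¬ G'.Adj w k} with hBdef
  have hBsub : B ⊆ K := fun k hk => hk.1
  have hAdjnotB : ∀ k ∈ K, k ∉ B → G'.Adj w k := by
    intro k hk hnB
    by_contra h
    exact hnB ⟨hk, h⟩
  have hT : ∀ s ∈ S, ∀ k₁ k₂ : α, k₁ ∈ B → k₂ ∈ B → k₁ ≠ k₂ → k₁ ≠ f s → k₂ ≠ f s →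
      G'.Adj u s ∨ G'.Adj w s := by
    intro s hsS k₁ k₂ hk₁ hk₂ h12 hf1 hf2
    by_contra hcon
    push_neg at hcon
    exact LO1 s hsS k₁ hk₁.1 k₂ hk₂.1 h12 hf1 hf2 hcon.1 hcon.2 hk₁.2 hk₂.2
  -- tail-edge helpers
  have htmemF : ∀ s ∈ S, G'.Adj u s ∨ G'.Adj w s →
      (if G'.Adj u s then s(u, s) else s(w, s)) ∈ F := by
    intro s hsS hd
    by_cases h : G'.Adj u s
    · rw [if_pos h]
      exact hfillF u s h (hHus s hsS)
        (by simp [Sym2.eq_iff, hSw s hsS, huw]) (Or.inr (Or.inl hsS))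
    · rw [if_neg h]
      exact hfillF w s (hd.resolve_left h) (hw s)
        (by simp [Sym2.eq_iff, Ne.symm huw, hSR s hsS u hu]) (Or.inr (Or.inl hsS))
  have htne : ∀ s ∈ S, ∀ s' ∈ S,
      (if G'.Adj u s then s(u, s) else s(w, s)) = (if G'.Adj u s' then s(u, s') else s(w, s')) →
      s = s' := by
    intro s hsS s' hs'S h
    by_cases h1 : G'.Adj u s <;> by_cases h2 : G'.Adj u s'
    · rw [if_pos h1, if_pos h2, Sym2.eq_iff] at h
      rcases h with ⟨_, h⟩ | ⟨h, _⟩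
      exacts [h, absurd h.symm (hSR s' hs'S u hu)]
    · rw [if_pos h1, if_neg h2, Sym2.eq_iff] at h
      rcases h with ⟨h, _⟩ | ⟨h, _⟩
      exacts [absurd h huw, absurd h.symm (hSR s' hs'S u hu)]
    · rw [if_neg h1, if_pos h2, Sym2.eq_iff] at h
      rcases h with ⟨h, _⟩ | ⟨_, h⟩
      exacts [absurd h.symm huw, absurd h (hSR s hsS u hu)]
    · rw [if_neg h1, if_neg h2, Sym2.eq_iff] at h
      rcases h with ⟨_, h⟩ | ⟨h, _⟩
      exacts [h, absurd h.symm (hSw s' hs'S)]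
  have htwne : ∀ s ∈ S, ∀ k ∈ K, (if G'.Adj u s then s(u, s) else s(w, s)) ≠ s(w, k) := by
    intro s hsS k hkK
    by_cases h : G'.Adj u s
    · rw [if_pos h]
      simp [Sym2.eq_iff, huw, Ne.symm (hKR k hkK u hu)]
    · rw [if_neg h]
      simp [Sym2.eq_iff, hSK s hsS k hkK, Ne.symm (hKw k hkK)]
  have hwkF : ∀ k ∈ K, G'.Adj w k → s(w, k) ∈ F := by
    intro k hkK h
    exact hfillF w k h (hw k)
      (by simp [Sym2.eq_iff, Ne.symm huw, hKR k hkK u hu]) (Or.inr (Or.inr hkK))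
  have hwkinj : ∀ k ∈ K, ∀ k' ∈ K, s(w, k) = s(w, k') → k = k' := by
    intro k hk k' hk' h
    rw [Sym2.eq_iff] at h
    rcases h with ⟨_, h⟩ | ⟨h, _⟩
    exacts [h, absurd h.symm (hKw k' hk')]
  -- main case analysis on the size of B
  rcases Nat.lt_or_ge B.ncard 3 with hBlt | hB3
  · rcases (by omega : B.ncard = 0 ∨ B.ncard = 1 ∨ B.ncard = 2) with hB0 | hB1 | hB2
    · -- every w–k is a fill edge
      have hBe : B = ∅ := (Set.ncard_eq_zero (Set.toFinite _)).mp hB0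
      refine Set.ncard_le_ncard_of_injOn (fun k => s(w, k)) ?_ ?_ (Set.toFinite _)
      · intro k hk
        refine hwkF k hk (hAdjnotB k hk ?_)
        rw [hBe]
        exact Set.notMem_empty k
      · intro k hk k' hk' h
        exact hwkinj k hk k' hk' h
    · -- |B| = 1
      obtain ⟨k₀, hBk⟩ := Set.ncard_eq_one.mp hB1
      have hk₀B : k₀ ∈ B := by rw [hBk]; rfl
      have hk₀K : k₀ ∈ K := hk₀B.1
      have hs₀S : g k₀ ∈ S := hgS k₀ hk₀K
      have hsub0 : ({g k₀} : Set α) ⊆ S := by simp [hs₀S]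
      have hcard' : 2 ≤ (S \ {g k₀}).ncard := by
        rw [Set.ncard_diff hsub0 (Set.toFinite _), Set.ncard_singleton]
        omega
      obtain ⟨s', hs', s'', hs'', hne⟩ :=
        (Set.one_lt_ncard (Set.toFinite _)).mp (by omega : 1 < (S \ {g k₀}).ncard)
      have hs'S : s' ∈ S := hs'.1
      have hs''S : s'' ∈ S := hs''.1
      have hkf' : k₀ ≠ f s' := Ne.symm (hfneg s' hs'S k₀ hk₀K (fun h => hs'.2 (by simp [h])))
      have hkf'' : k₀ ≠ f s'' := Ne.symm (hfneg s'' hs''S k₀ hk₀K (fun h => hs''.2 (by simp [h])))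
      have h5 : G'.Adj u s' ∨ G'.Adj w s' ∨ G'.Adj u s'' ∨ G'.Adj w s'' ∨ G'.Adj s' s'' := by
        by_contra hc
        push_neg at hc
        exact LF1 k₀ hk₀K hk₀B.2 s' hs'S s'' hs''S hne hkf' hkf''
          hc.1 hc.2.1 hc.2.2.1 hc.2.2.2.1 hc.2.2.2.2
      obtain ⟨e₀, he₀F, he₀w⟩ : ∃ e₀, e₀ ∈ F ∧ ∀ k ∈ K, e₀ ≠ s(w, k) := by
        rcases h5 with h | h | h | h | h
        · exact ⟨s(u, s'), hfillF u s' h (hHus s' hs'S)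
            (by simp [Sym2.eq_iff, hSw s' hs'S, huw]) (Or.inr (Or.inl hs'S)),
            fun k hk => by simp [Sym2.eq_iff, huw, Ne.symm (hKR k hk u hu)]⟩
        · exact ⟨s(w, s'), hfillF w s' h (hw s')
            (by simp [Sym2.eq_iff, Ne.symm huw, hSR s' hs'S u hu]) (Or.inr (Or.inl hs'S)),
            fun k hk => by simp [Sym2.eq_iff, hSK s' hs'S k hk, Ne.symm (hKw k hk)]⟩
        · exact ⟨s(u, s''), hfillF u s'' h (hHus s'' hs''S)
            (by simp [Sym2.eq_iff, hSw s'' hs''S, huw]) (Or.inr (Or.inl hs''S)),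
            fun k hk => by simp [Sym2.eq_iff, huw, Ne.symm (hKR k hk u hu)]⟩
        · exact ⟨s(w, s''), hfillF w s'' h (hw s'')
            (by simp [Sym2.eq_iff, Ne.symm huw, hSR s'' hs''S u hu]) (Or.inr (Or.inl hs''S)),
            fun k hk => by simp [Sym2.eq_iff, hSK s'' hs''S k hk, Ne.symm (hKw k hk)]⟩
        · exact ⟨s(s', s''), hfillF s' s'' h (hSind s' hs'S s'' hs''S)
            (by simp [Sym2.eq_iff, hSR s' hs'S u hu, hSw s'' hs''S, hSw s' hs'S,
              hSR s'' hs''S u hu]) (Or.inl (Or.inl hs'S)),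
            fun k hk => by simp [Sym2.eq_iff, hSw s' hs'S, hSK s' hs'S k hk,
              hSK s'' hs''S k hk]⟩
      refine Set.ncard_le_ncard_of_injOn
        (fun k => if k = k₀ then e₀ else s(w, k)) ?_ ?_ (Set.toFinite _)
      · intro k hk
        by_cases hkk : k = k₀
        · rw [if_pos hkk]; exact he₀F
        · rw [if_neg hkk]
          exact hwkF k hk (hAdjnotB k hk (fun hmem => hkk (by rw [hBk] at hmem; exact hmem)))
      · intro k hk k' hk' h
        dsimp only at h
        by_cases h1 : k = k₀ <;> by_cases h2 : k' = k₀
        · rw [h1, h2]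
        · rw [if_pos h1, if_neg h2] at h; exact absurd h (he₀w k' hk')
        · rw [if_neg h1, if_pos h2] at h; exact absurd h.symm (he₀w k hk)
        · rw [if_neg h1, if_neg h2] at h; exact hwkinj k hk k' hk' h
    · -- |B| = 2
      obtain ⟨k₁, k₂, h12, hBk⟩ := Set.ncard_eq_two.mp hB2
      have hk₁B : k₁ ∈ B := by rw [hBk]; exact Or.inl rfl
      have hk₂B : k₂ ∈ B := by rw [hBk]; exact Or.inr rfl
      have hk₁K : k₁ ∈ K := hk₁B.1
      have hk₂K : k₂ ∈ K := hk₂B.1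
      have hTgen : ∀ σ ∈ S, σ ≠ g k₁ → σ ≠ g k₂ → G'.Adj u σ ∨ G'.Adj w σ :=
        fun σ hσ h1 h2 => hT σ hσ k₁ k₂ hk₁B hk₂B h12
          (Ne.symm (hfneg σ hσ k₁ hk₁K h1)) (Ne.symm (hfneg σ hσ k₂ hk₂K h2))
      rcases Nat.lt_or_ge K.ncard 4 with hq | hq
      · -- K.ncard = 3
        have hq3 : K.ncard = 3 := by omega
        have hKB1 : (K \ B).ncard = 1 := by
          rw [Set.ncard_diff hBsub (Set.toFinite _)]; omega
        obtain ⟨k₃, hKBk⟩ := Set.ncard_eq_one.mp hKB1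
        have hk₃ : k₃ ∈ K \ B := by rw [hKBk]; rfl
        have hk₃K : k₃ ∈ K := hk₃.1
        have hwk₃ : G'.Adj w k₃ := hAdjnotB k₃ hk₃K hk₃.2
        have hk₃1 : k₃ ≠ k₁ := fun h => hk₃.2 (h ▸ hk₁B)
        have hk₃2 : k₃ ≠ k₂ := fun h => hk₃.2 (h ▸ hk₂B)
        have hs₃S : g k₃ ∈ S := hgS k₃ hk₃K
        have hs₁S : g k₁ ∈ S := hgS k₁ hk₁K
        have hg31 : g k₃ ≠ g k₁ := fun h => hk₃1 (hgInj k₃ hk₃K k₁ hk₁K h)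
        have hg32 : g k₃ ≠ g k₂ := fun h => hk₃2 (hgInj k₃ hk₃K k₂ hk₂K h)
        have hTs₃ : G'.Adj u (g k₃) ∨ G'.Adj w (g k₃) := hTgen (g k₃) hs₃S hg31 hg32
        have hfgk₃ : f (g k₃) = k₃ := hfg k₃ hk₃K
        have hfgk₁ : f (g k₁) = k₁ := hfg k₁ hk₁K
        have hH3 : ¬ H.Adj (g k₃) k₃ := by
          have := hHsfs (g k₃) hs₃S; rwa [hfgk₃] at this
        have hH1 : ¬ H.Adj (g k₁) k₁ := by
          have := hHsfs (g k₁) hs₁S; rwa [hfgk₁] at this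
        obtain ⟨e₂, e₃, he₂F, he₃F, h12', h13', h23'⟩ :
            ∃ e₂ e₃, e₂ ∈ F ∧ e₃ ∈ F ∧ s(w, k₃) ≠ e₂ ∧ s(w, k₃) ≠ e₃ ∧ e₂ ≠ e₃ := by
          by_cases hus₃ : G'.Adj u (g k₃)
          · have he₂F : s(u, g k₃) ∈ F := by
              have := htmemF (g k₃) hs₃S hTs₃
              rwa [if_pos hus₃] at this
            have hne2 : s(w, k₃) ≠ s(u, g k₃) := by
              simp [Sym2.eq_iff, Ne.symm huw, Ne.symm (hSw (g k₃) hs₃S),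
                hKR k₃ hk₃K u hu]
            have h4 : G'.Adj u (g k₁) ∨ G'.Adj (g k₃) (g k₁) ∨
                G'.Adj (g k₃) (f (g k₃)) ∨ G'.Adj (g k₁) (f (g k₁)) := by
              by_contra hc
              push_neg at hc
              exact LO3 (g k₃) hs₃S (g k₁) hs₁S hg31 hus₃ hc.1 hc.2.1 hc.2.2.1 hc.2.2.2
            rw [hfgk₃, hfgk₁] at h4
            rcases h4 with h | h | h | h
            · exact ⟨_, _, he₂F, hfillF u (g k₁) h (hHus (g k₁) hs₁S)
                (by simp [Sym2.eq_iff, hSw (g k₁) hs₁S, huw]) (Or.inr (Or.inl hs₁S)), hne2,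
                by simp [Sym2.eq_iff, Ne.symm huw, Ne.symm (hSw (g k₁) hs₁S),
                  hKR k₃ hk₃K u hu],
                by simp [Sym2.eq_iff, hg31, Ne.symm (hSR (g k₁) hs₁S u hu)]⟩
            · exact ⟨_, _, he₂F, hfillF (g k₃) (g k₁) h (hSind (g k₃) hs₃S (g k₁) hs₁S)
                (by simp [Sym2.eq_iff, hSR (g k₃) hs₃S u hu, hSw (g k₃) hs₃S,
                  hSw (g k₁) hs₁S, hSR (g k₁) hs₁S u hu]) (Or.inl (Or.inl hs₃S)), hne2,
                by simp [Sym2.eq_iff, Ne.symm (hSw (g k₃) hs₃S), Ne.symm (hSw (g k₁) hs₁S),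
                  Ne.symm (hSK (g k₃) hs₃S k₃ hk₃K)],
                by simp [Sym2.eq_iff, Ne.symm (hSR (g k₃) hs₃S u hu),
                  Ne.symm (hSR (g k₁) hs₁S u hu)]⟩
            · exact ⟨_, _, he₂F, hfillF (g k₃) k₃ h hH3
                (by simp [Sym2.eq_iff, hSR (g k₃) hs₃S u hu, hSw (g k₃) hs₃S])
                (Or.inl (Or.inl hs₃S)), hne2,
                by simp [Sym2.eq_iff, Ne.symm (hSw (g k₃) hs₃S), Ne.symm (hKw k₃ hk₃K)],
                by simp [Sym2.eq_iff, Ne.symm (hSR (g k₃) hs₃S u hu),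
                  Ne.symm (hKR k₃ hk₃K u hu)]⟩
            · exact ⟨_, _, he₂F, hfillF (g k₁) k₁ h hH1
                (by simp [Sym2.eq_iff, hSR (g k₁) hs₁S u hu, hSw (g k₁) hs₁S])
                (Or.inl (Or.inl hs₁S)), hne2,
                by simp [Sym2.eq_iff, Ne.symm (hSw (g k₁) hs₁S), Ne.symm (hKw k₁ hk₁K),
                  Ne.symm (hSK (g k₁) hs₁S k₃ hk₃K), hk₃1],
                by simp [Sym2.eq_iff, Ne.symm (hSR (g k₁) hs₁S u hu),
                  Ne.symm (hKR k₁ hk₁K u hu), Ne.symm hg31]⟩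
          · have hws₃ : G'.Adj w (g k₃) := hTs₃.resolve_left hus₃
            have he₂F : s(w, g k₃) ∈ F := by
              have := htmemF (g k₃) hs₃S hTs₃
              rwa [if_neg hus₃] at this
            have hne2 : s(w, k₃) ≠ s(w, g k₃) := by
              simp [Sym2.eq_iff, Ne.symm (hSK (g k₃) hs₃S k₃ hk₃K), Ne.symm (hSw (g k₃) hs₃S)]
            have h4 : G'.Adj w (g k₁) ∨ G'.Adj (g k₃) (g k₁) ∨
                G'.Adj (g k₃) (f (g k₃)) ∨ G'.Adj (g k₁) (f (g k₁)) := by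
              by_contra hc
              push_neg at hc
              exact LO4 (g k₃) hs₃S (g k₁) hs₁S hg31 hws₃ (by rw [hfgk₃]; exact hwk₃)
                hc.1 hc.2.1 hc.2.2.1 hc.2.2.2
            rw [hfgk₃, hfgk₁] at h4
            rcases h4 with h | h | h | h
            · exact ⟨_, _, he₂F, hfillF w (g k₁) h (hw (g k₁))
                (by simp [Sym2.eq_iff, Ne.symm huw, hSR (g k₁) hs₁S u hu])
                (Or.inr (Or.inl hs₁S)), hne2,
                by simp [Sym2.eq_iff, Ne.symm (hSK (g k₁) hs₁S k₃ hk₃K), hKw k₃ hk₃K],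
                by simp [Sym2.eq_iff, hg31, Ne.symm (hSw (g k₁) hs₁S)]⟩
            · exact ⟨_, _, he₂F, hfillF (g k₃) (g k₁) h (hSind (g k₃) hs₃S (g k₁) hs₁S)
                (by simp [Sym2.eq_iff, hSR (g k₃) hs₃S u hu, hSw (g k₃) hs₃S,
                  hSw (g k₁) hs₁S, hSR (g k₁) hs₁S u hu]) (Or.inl (Or.inl hs₃S)), hne2,
                by simp [Sym2.eq_iff, Ne.symm (hSw (g k₃) hs₃S), Ne.symm (hSw (g k₁) hs₁S),
                  Ne.symm (hSK (g k₃) hs₃S k₃ hk₃K)],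
                by simp [Sym2.eq_iff, Ne.symm (hSw (g k₃) hs₃S), Ne.symm (hSw (g k₁) hs₁S)]⟩
            · exact ⟨_, _, he₂F, hfillF (g k₃) k₃ h hH3
                (by simp [Sym2.eq_iff, hSR (g k₃) hs₃S u hu, hSw (g k₃) hs₃S])
                (Or.inl (Or.inl hs₃S)), hne2,
                by simp [Sym2.eq_iff, Ne.symm (hSw (g k₃) hs₃S), Ne.symm (hKw k₃ hk₃K)],
                by simp [Sym2.eq_iff, Ne.symm (hSw (g k₃) hs₃S), Ne.symm (hKw k₃ hk₃K)]⟩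
            · exact ⟨_, _, he₂F, hfillF (g k₁) k₁ h hH1
                (by simp [Sym2.eq_iff, hSR (g k₁) hs₁S u hu, hSw (g k₁) hs₁S])
                (Or.inl (Or.inl hs₁S)), hne2,
                by simp [Sym2.eq_iff, Ne.symm (hSw (g k₁) hs₁S), Ne.symm (hKw k₁ hk₁K),
                  Ne.symm (hSK (g k₁) hs₁S k₃ hk₃K), hk₃1],
                by simp [Sym2.eq_iff, Ne.symm (hSw (g k₁) hs₁S), Ne.symm (hKw k₁ hk₁K),
                  Ne.symm hg31]⟩
        have hsub3 : ({s(w, k₃), e₂, e₃} : Set (Sym2 α)) ⊆ F := by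
          intro e he
          simp only [Set.mem_insert_iff, Set.mem_singleton_iff] at he
          rcases he with rfl | rfl | rfl
          exacts [hwkF k₃ hk₃K hwk₃, he₂F, he₃F]
        have hc3 : ({s(w, k₃), e₂, e₃} : Set (Sym2 α)).ncard = 3 := by
          rw [Set.ncard_insert_of_notMem (by simp [h12', h13']),
              Set.ncard_insert_of_notMem (by simp [h23']), Set.ncard_singleton]
        calc K.ncard = 3 := hq3
          _ = ({s(w, k₃), e₂, e₃} : Set (Sym2 α)).ncard := hc3.symm
          _ ≤ F.ncard := Set.ncard_le_ncard hsub3 (Set.toFinite _)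
      · -- K.ncard ≥ 4
        have hsub2 : ({g k₁, g k₂} : Set α) ⊆ S := by
          intro x hx
          simp only [Set.mem_insert_iff, Set.mem_singleton_iff] at hx
          rcases hx with rfl | rfl
          exacts [hgS k₁ hk₁K, hgS k₂ hk₂K]
        have hcard2 : ({g k₁, g k₂} : Set α).ncard ≤ 2 :=
          le_trans (Set.ncard_insert_le _ _) (by simp)
        have h2 : 1 < (S \ {g k₁, g k₂}).ncard := by
          rw [Set.ncard_diff hsub2 (Set.toFinite _)]
          omega
        obtain ⟨σ₁, hσ₁, σ₂, hσ₂, hσne⟩ := (Set.one_lt_ncard (Set.toFinite _)).mp h2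
        have hσ₁S : σ₁ ∈ S := hσ₁.1
        have hσ₂S : σ₂ ∈ S := hσ₂.1
        have hTσ₁ := hTgen σ₁ hσ₁S (fun h => hσ₁.2 (by simp [h])) (fun h => hσ₁.2 (by simp [h]))
        have hTσ₂ := hTgen σ₂ hσ₂S (fun h => hσ₂.2 (by simp [h])) (fun h => hσ₂.2 (by simp [h]))
        refine Set.ncard_le_ncard_of_injOn (fun k => if k = k₁ then
            (if G'.Adj u σ₁ then s(u, σ₁) else s(w, σ₁)) else if k = k₂ then
            (if G'.Adj u σ₂ then s(u, σ₂) else s(w, σ₂)) else s(w, k)) ?_ ?_ (Set.toFinite _)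
        · intro k hk
          by_cases e1 : k = k₁
          · rw [if_pos e1]; exact htmemF σ₁ hσ₁S hTσ₁
          · rw [if_neg e1]
            by_cases e3 : k = k₂
            · rw [if_pos e3]; exact htmemF σ₂ hσ₂S hTσ₂
            · rw [if_neg e3]
              refine hwkF k hk (hAdjnotB k hk ?_)
              rw [hBk]
              simp [e1, e3]
        · intro k hk k' hk' h
          dsimp only at h
          by_cases e1 : k = k₁
          · by_cases e2 : k' = k₁
            · rw [e1, e2]
            · rw [if_pos e1, if_neg e2] at h
              by_cases e4 : k' = k₂
              · rw [if_pos e4] at h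
                exact absurd (htne σ₁ hσ₁S σ₂ hσ₂S h) hσne
              · rw [if_neg e4] at h
                exact absurd h (htwne σ₁ hσ₁S k' hk')
          · by_cases e2 : k' = k₁
            · rw [if_neg e1, if_pos e2] at h
              by_cases e3 : k = k₂
              · rw [if_pos e3] at h
                exact absurd (htne σ₂ hσ₂S σ₁ hσ₁S h) (Ne.symm hσne)
              · rw [if_neg e3] at h
                exact absurd h.symm (htwne σ₁ hσ₁S k hk)
            · rw [if_neg e1, if_neg e2] at h
              by_cases e3 : k = k₂ <;> by_cases e4 : k' = k₂
              · rw [e3, e4]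
              · rw [if_pos e3, if_neg e4] at h
                exact absurd h (htwne σ₂ hσ₂S k' hk')
              · rw [if_neg e3, if_pos e4] at h
                exact absurd h.symm (htwne σ₂ hσ₂S k hk)
              · rw [if_neg e3, if_neg e4] at h
                exact hwkinj k hk k' hk' h
  · -- |B| ≥ 3 : every s ∈ S has a fill edge to u or w
    have hTall : ∀ s ∈ S, G'.Adj u s ∨ G'.Adj w s := by
      intro s hsS
      have hsub : B ⊆ (B \ {f s}) ∪ {f s} := by
        intro x hx
        by_cases hxf : x = f s
        · exact Or.inr (by simp [hxf])
        · exact Or.inl ⟨hx, hxf⟩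
      have h1 := Set.ncard_le_ncard hsub (Set.toFinite _)
      have h2 := Set.ncard_union_le (B \ {f s}) {f s}
      rw [Set.ncard_singleton] at h2
      have h2' : 1 < (B \ {f s}).ncard := by omega
      obtain ⟨k₁, hk₁, k₂, hk₂, hne⟩ := (Set.one_lt_ncard (Set.toFinite _)).mp h2'
      exact hT s hsS k₁ k₂ hk₁.1 hk₂.1 hne (fun h => hk₁.2 (by simp [h]))
        (fun h => hk₂.2 (by simp [h]))
    refine Set.ncard_le_ncard_of_injOn
      (fun k => if G'.Adj u (g k) then s(u, g k) else s(w, g k)) ?_ ?_ (Set.toFinite _)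
    · intro k hk
      exact htmemF (g k) (hgS k hk) (hTall (g k) (hgS k hk))
    · intro k hk k' hk' h
      exact hgInj k hk k' hk' (htne (g k) (hgS k hk) (g k') (hgS k' hk') h)
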